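/- Let {A_k(t)}_{k≥0} be differentiable nonnegative functions on [0,∞) satisfying (d/dt)A_k + C_0 A_k ≤ C_1^{n_k} + C_1^k A_{k-1}^{2 + C_1/n_k} for all k ≥ 1, where n_k = 2^k(a+1) - a with a > -1 and C_0, C_1 > 0. If sup_k A_k(0)^{1/n_k} ≤ M and sup_{t≥0} A_0(t) ≤ M^{n_0}, then there is a constant C depending only on C_0, C_1, M, a such that A_k(t)^{1/n_k} ≤ C for all k ≥ 0 and all t ≥ 0. -/

import Mathlib

open Real

private lemma aux_ode17 (f : ℝ → ℝ) (hf : Differentiable ℝ f) {C₀ : ℝ} (hC₀ : 0 < C₀) (G : ℝ)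
    (h : ∀ t, 0 ≤ t → deriv f t + C₀ * f t ≤ G) (h0 : f 0 ≤ G / C₀) :
    ∀ t, 0 ≤ t → f t ≤ G / C₀ := by
  set g : ℝ → ℝ := fun t => (f t - G / C₀) * Real.exp (C₀ * t) with hg
  have hder : ∀ t, HasDerivAt g ((deriv f t + C₀ * f t - G) * Real.exp (C₀ * t)) t := by
    intro t
    have h1 : HasDerivAt f (deriv f t) t := (hf t).hasDerivAt
    have h2 : HasDerivAt (fun t => Real.exp (C₀ * t)) (Real.exp (C₀ * t) * C₀) t := by
      have := (Real.hasDerivAt_exp (C₀ * t)).comp t ((hasDerivAt_id t).const_mul C₀)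
      simp at this
      exact this
    have h3 := (h1.sub_const (G / C₀)).mul h2
    refine h3.congr_deriv ?_
    have hC : C₀ ≠ 0 := hC₀.ne'
    field_simp
    ring
  have hgd : Differentiable ℝ g := fun t => (hder t).differentiableAt
  have hanti : AntitoneOn g (Set.Ici (0:ℝ)) := by
    apply antitoneOn_of_deriv_nonpos (convex_Ici 0) hgd.continuous.continuousOn
      (fun x _ => (hgd x).differentiableWithinAt)
    intro x hx
    rw [interior_Ici] at hx
    rw [(hder x).deriv]
    have hx0 : (0:ℝ) ≤ x := le_of_lt hx
    have := h x hx0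
    have hexp := Real.exp_pos (C₀ * x)
    nlinarith
  intro t ht
  have hgt : g t ≤ g 0 := hanti (Set.self_mem_Ici) ht ht
  have hg0 : g 0 ≤ 0 := by
    simp only [hg, mul_zero, Real.exp_zero, mul_one]
    linarith
  have hgt0 : (f t - G / C₀) * Real.exp (C₀ * t) ≤ 0 := le_trans hgt hg0
  have hexp := Real.exp_pos (C₀ * t)
  nlinarith

private lemma aux_geom17a : ∀ k : ℕ, (∑ j ∈ Finset.range k, ((2:ℝ)^(j+1))⁻¹) = 1 - ((2:ℝ)^k)⁻¹ := by
  intro k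
  induction k with
  | zero => simp
  | succ k ih =>
    rw [Finset.sum_range_succ, ih]
    have h2 : (0:ℝ) < 2^k := by positivity
    field_simp
    ring

private lemma aux_geom17b : ∀ k : ℕ, (∑ j ∈ Finset.range k, ((j:ℝ)+1) * ((2:ℝ)^(j+1))⁻¹)
    = 2 - ((k:ℝ)+2) * ((2:ℝ)^k)⁻¹ := by
  intro k
  induction k with
  | zero => simp
  | succ k ih =>
    rw [Finset.sum_range_succ, ih]
    have h2 : (0:ℝ) < 2^k := by positivity
    push_cast
    field_simp
    ring

set_option maxHeartbeats 2000000 in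
theorem stmt_17 (a C₀ C₁ M : ℝ) (ha : -1 < a) (hC₀ : 0 < C₀) (hC₁ : 0 < C₁) (hM : 0 < M)
    (n : ℕ → ℝ) (hn : ∀ k : ℕ, n k = 2 ^ k * (a + 1) - a)
    (A : ℕ → ℝ → ℝ) (hdiff : ∀ k, Differentiable ℝ (A k))
    (hnn : ∀ k t, 0 ≤ t → 0 ≤ A k t)
    (hineq : ∀ k : ℕ, 1 ≤ k → ∀ t : ℝ, 0 ≤ t →
      deriv (A k) t + C₀ * A k t ≤ C₁ ^ n k + C₁ ^ k * A (k - 1) t ^ (2 + C₁ / n k))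
    (h0 : ∀ k, A k 0 ^ (n k)⁻¹ ≤ M)
    (hA0 : ∀ t : ℝ, 0 ≤ t → A 0 t ≤ M ^ n 0) :
    ∃ C : ℝ, ∀ k : ℕ, ∀ t : ℝ, 0 ≤ t → A k t ^ (n k)⁻¹ ≤ C := by
  have ha1 : (0:ℝ) < a + 1 := by linarith
  have h2k : ∀ k : ℕ, (1:ℝ) ≤ 2 ^ k := by
    intro k
    induction k with
    | zero => norm_num
    | succ k ih => rw [pow_succ]; nlinarith
  have h2kpos : ∀ k : ℕ, (0:ℝ) < 2 ^ k := fun k => by positivity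
  have hn1 : ∀ k, 1 ≤ n k := by
    intro k; rw [hn]; nlinarith [h2k k]
  have hnpos : ∀ k, 0 < n k := fun k => lt_of_lt_of_le one_pos (hn1 k)
  have hnne : ∀ k, n k ≠ 0 := fun k => (hnpos k).ne'
  have hmono : ∀ k, n k ≤ n (k+1) := by
    intro k
    rw [hn k, hn (k+1)]
    have h1 : (2:ℝ) ^ (k+1) = 2 * 2 ^ k := by ring
    nlinarith [h2kpos k]
  set m : ℝ := min 1 (a + 1) with hmdef
  have hm : 0 < m := lt_min one_pos ha1
  have hngrow : ∀ k, m * 2 ^ k ≤ n k := by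
    intro k
    rw [hn k]
    rcases le_total a 0 with h | h
    · have h1 : m ≤ a + 1 := min_le_right _ _
      have h2 : m * 2 ^ k ≤ (a+1) * 2 ^ k :=
        mul_le_mul_of_nonneg_right h1 (h2kpos k).le
      nlinarith
    · have h1 : m ≤ 1 := min_le_left _ _
      have h2 : m * 2 ^ k ≤ 1 * 2 ^ k :=
        mul_le_mul_of_nonneg_right h1 (h2kpos k).le
      nlinarith [h2k k]
  set K : ℝ := 1 + C₁ + 2 / C₀ + M with hKdef
  have hKpos : 0 < K := by
    have : 0 < 2 / C₀ := by positivity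
    simp only [hKdef]; linarith
  have hK1 : 1 ≤ K := by
    have : 0 < 2 / C₀ := by positivity
    simp only [hKdef]; linarith
  have hKC₁ : C₁ ≤ K := by
    have : 0 < 2 / C₀ := by positivity
    simp only [hKdef]; linarith
  have hK2C : 2 / C₀ ≤ K := by simp only [hKdef]; linarith
  have hKM : M ≤ K := by
    have : 0 < 2 / C₀ := by positivity
    simp only [hKdef]; linarith
  have hlogK : 0 ≤ Real.log K := Real.log_nonneg hK1
  set κ : ℝ := 2 * Real.log K with hκdef
  have hκ : 0 ≤ κ := by simp only [hκdef]; linarith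
  set c : ℝ := |a| + C₁ with hcdef
  have hc : 0 ≤ c := by simp only [hcdef]; positivity
  set L : ℝ := |Real.log C₁| + |Real.log (2 / C₀)| with hLdef
  have hL : 0 ≤ L := by simp only [hLdef]; positivity
  obtain ⟨σ, hσdef⟩ : ∃ σ : ℕ → ℝ, σ = fun k => ∑ j ∈ Finset.range k, (n (j+1))⁻¹ := ⟨_, rfl⟩
  obtain ⟨τ, hτdef⟩ : ∃ τ : ℕ → ℝ, τ = fun k => ∑ j ∈ Finset.range k, ((j:ℝ)+1) * (n (j+1))⁻¹ := ⟨_, rfl⟩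
  obtain ⟨e, hedef⟩ : ∃ e : ℕ → ℝ, e = fun k => Real.exp (c * σ k) * (κ + L * τ k) := ⟨_, rfl⟩
  have hσnn : ∀ k, 0 ≤ σ k := by
    intro k
    rw [hσdef]
    apply Finset.sum_nonneg
    intro j _
    exact inv_nonneg.2 (hnpos (j+1)).le
  have hτnn : ∀ k, 0 ≤ τ k := by
    intro k
    rw [hτdef]
    apply Finset.sum_nonneg
    intro j _
    exact mul_nonneg (by positivity) (inv_nonneg.2 (hnpos (j+1)).le)
  have hσbd : ∀ k, σ k ≤ 1 / m := by
    intro k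
    rw [hσdef]
    have h1 : (∑ j ∈ Finset.range k, (n (j+1))⁻¹) ≤ ∑ j ∈ Finset.range k, m⁻¹ * ((2:ℝ)^(j+1))⁻¹ := by
      apply Finset.sum_le_sum
      intro j _
      have h2 : (0:ℝ) < m * 2 ^ (j+1) := by positivity
      have h3 : m * 2 ^ (j+1) ≤ n (j+1) := hngrow (j+1)
      have := one_div_le_one_div_of_le h2 h3
      rw [one_div, one_div] at this
      calc (n (j+1))⁻¹ ≤ (m * 2 ^ (j+1))⁻¹ := this
        _ = m⁻¹ * ((2:ℝ)^(j+1))⁻¹ := by rw [mul_inv]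
    rw [← Finset.mul_sum, aux_geom17a k] at h1
    have h4 : (1:ℝ) - ((2:ℝ)^k)⁻¹ ≤ 1 := by
      have := inv_nonneg.2 (h2kpos k).le
      linarith
    have h5 : m⁻¹ * (1 - ((2:ℝ)^k)⁻¹) ≤ m⁻¹ * 1 :=
      mul_le_mul_of_nonneg_left h4 (inv_nonneg.2 hm.le)
    rw [one_div]
    linarith
  have hτbd : ∀ k, τ k ≤ 2 / m := by
    intro k
    rw [hτdef]
    have h1 : (∑ j ∈ Finset.range k, ((j:ℝ)+1) * (n (j+1))⁻¹) ≤ ∑ j ∈ Finset.range k, m⁻¹ * (((j:ℝ)+1) * ((2:ℝ)^(j+1))⁻¹) := by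
      apply Finset.sum_le_sum
      intro j _
      have h2 : (0:ℝ) < m * 2 ^ (j+1) := by positivity
      have h3 : m * 2 ^ (j+1) ≤ n (j+1) := hngrow (j+1)
      have h4 : (n (j+1))⁻¹ ≤ (m * 2 ^ (j+1))⁻¹ := by
        have := one_div_le_one_div_of_le h2 h3
        rw [one_div, one_div] at this
        exact this
      have h5 : (0:ℝ) ≤ (j:ℝ)+1 := by positivity
      calc ((j:ℝ)+1) * (n (j+1))⁻¹ ≤ ((j:ℝ)+1) * (m * 2 ^ (j+1))⁻¹ :=
            mul_le_mul_of_nonneg_left h4 h5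
        _ = m⁻¹ * (((j:ℝ)+1) * ((2:ℝ)^(j+1))⁻¹) := by rw [mul_inv]; ring
    rw [← Finset.mul_sum, aux_geom17b k] at h1
    have h4 : (2:ℝ) - ((k:ℝ)+2) * ((2:ℝ)^k)⁻¹ ≤ 2 := by
      have h5 : (0:ℝ) ≤ ((k:ℝ)+2) * ((2:ℝ)^k)⁻¹ := by positivity
      linarith
    have h6 : m⁻¹ * (2 - ((k:ℝ)+2) * ((2:ℝ)^k)⁻¹) ≤ m⁻¹ * 2 :=
      mul_le_mul_of_nonneg_left h4 (inv_nonneg.2 hm.le)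
    have : (2:ℝ)/m = m⁻¹ * 2 := by rw [div_eq_mul_inv]; ring
    linarith
  have heκ : ∀ k, κ ≤ e k := by
    intro k
    rw [hedef]
    have h1 : 1 ≤ Real.exp (c * σ k) := Real.one_le_exp (mul_nonneg hc (hσnn k))
    have h2 : κ ≤ κ + L * τ k := by
      have := mul_nonneg hL (hτnn k)
      linarith
    calc κ ≤ κ + L * τ k := h2
      _ = 1 * (κ + L * τ k) := (one_mul _).symm
      _ ≤ Real.exp (c * σ k) * (κ + L * τ k) := by
          apply mul_le_mul_of_nonneg_right h1
          have := mul_nonneg hL (hτnn k)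
          linarith
  have henn : ∀ k, 0 ≤ e k := fun k => le_trans hκ (heκ k)
  set Ebd : ℝ := Real.exp (c * (1/m)) * (κ + L * (2/m)) with hEdef
  have heE : ∀ k, e k ≤ Ebd := by
    intro k
    simp only [hedef, hEdef]
    have h1 : Real.exp (c * σ k) ≤ Real.exp (c * (1/m)) := by
      apply Real.exp_le_exp.2
      apply mul_le_mul_of_nonneg_left _ hc
      rw [one_div]
      have := hσbd k
      rw [one_div] at this
      exact this
    have h2 : κ + L * τ k ≤ κ + L * (2/m) := by
      have := mul_le_mul_of_nonneg_left (hτbd k) hL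
      linarith
    apply mul_le_mul h1 h2 _ (Real.exp_pos _).le
    have := mul_nonneg hL (hτnn k)
    linarith
  have he0 : e 0 = κ := by
    simp only [hedef, hσdef, hτdef]
    simp
  -- the key recursive inequality
  have hkey : ∀ k : ℕ, (n (k+1) + c) * e k + ((k:ℝ)+1) * L ≤ n (k+1) * e (k+1) := by
    intro k
    have hNpos := hnpos (k+1)
    have hNne := hnne (k+1)
    have hσs : σ (k+1) = σ k + (n (k+1))⁻¹ := by
      simp only [hσdef]
      rw [Finset.sum_range_succ]
    have hτs : τ (k+1) = τ k + ((k:ℝ)+1) * (n (k+1))⁻¹ := by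
      simp only [hτdef]
      rw [Finset.sum_range_succ]
    have hes : e (k+1) = Real.exp (c * σ k) * Real.exp (c * (n (k+1))⁻¹)
        * (κ + L * τ k + L * (((k:ℝ)+1) * (n (k+1))⁻¹)) := by
      simp only [hedef]
      rw [hσs, hτs, mul_add c, Real.exp_add]
      ring
    set P : ℝ := Real.exp (c * σ k) with hPdef
    set Q : ℝ := Real.exp (c * (n (k+1))⁻¹) with hQdef
    set X : ℝ := κ + L * τ k with hXdef
    have hP1 : 1 ≤ P := Real.one_le_exp (mul_nonneg hc (hσnn k))
    have hQ1 : 1 ≤ Q := Real.one_le_exp (mul_nonneg hc (inv_nonneg.2 (hnpos (k+1)).le))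
    have hXnn : 0 ≤ X := by
      simp only [hXdef]
      have := mul_nonneg hL (hτnn k)
      linarith
    have hQbd : 1 + c * (n (k+1))⁻¹ ≤ Q := by
      have := Real.add_one_le_exp (c * (n (k+1))⁻¹)
      simp only [hQdef]
      linarith
    have hQN : n (k+1) + c ≤ Q * n (k+1) := by
      have h1 : (1 + c * (n (k+1))⁻¹) * n (k+1) = n (k+1) + c := by
        field_simp
      nlinarith [mul_le_mul_of_nonneg_right hQbd hNpos.le]
    have hek : e k = P * X := by simp only [hedef, hPdef, hXdef]
    have hNe : n (k+1) * e (k+1) = P * Q * (X * n (k+1) + L * ((k:ℝ)+1)) := by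
      rw [hes]
      field_simp
    rw [hek, hNe]
    have hfact1 : 0 ≤ P * X * (Q * n (k+1) - (n (k+1) + c)) := by
      apply mul_nonneg (mul_nonneg (by linarith) hXnn)
      linarith
    have hfact2 : 0 ≤ L * ((k:ℝ)+1) * (P * Q - 1) := by
      apply mul_nonneg (by positivity)
      nlinarith
    nlinarith [hfact1, hfact2]
  -- main induction
  have hclaim : ∀ k, ∀ t : ℝ, 0 ≤ t → A k t ≤ Real.exp (n k * e k) := by
    intro k
    induction k with
    | zero =>
      intro t ht
      have hn0 : n 0 = 1 := by rw [hn]; norm_num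
      have h1 := hA0 t ht
      rw [hn0, Real.rpow_one] at h1
      have h2 : M ≤ Real.exp κ := by
        have h3 : Real.exp κ = K * K := by
          simp only [hκdef]
          rw [two_mul, Real.exp_add, Real.exp_log hKpos]
        rw [h3]
        nlinarith [mul_nonneg (by linarith : (0:ℝ) ≤ K - 1) hKpos.le]
      calc A 0 t ≤ M := h1
        _ ≤ Real.exp κ := h2
        _ = Real.exp (n 0 * e 0) := by rw [hn0, he0, one_mul]
    | succ k ih =>
      have hNpos := hnpos (k+1)
      have hNne := hnne (k+1)
      have hN1 := hn1 (k+1)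
      have hC₀2 : (0:ℝ) < C₀ / 2 := by linarith
      have hlC : Real.log (C₀ / 2) = - Real.log (2 / C₀) := by
        rw [← Real.log_inv, inv_div]
      have hlogC₁K : Real.log C₁ ≤ Real.log K := Real.log_le_log hC₁ hKC₁
      have hl2K : Real.log (2 / C₀) ≤ Real.log K := Real.log_le_log (by positivity) hK2C
      -- first term bound
      have hterm1 : C₁ ^ n (k+1) ≤ (C₀/2) * Real.exp (n (k+1) * e (k+1)) := by
        have h1 : C₁ ^ n (k+1) = Real.exp (Real.log C₁ * n (k+1)) :=
          Real.rpow_def_of_pos hC₁ _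
        have h2 : Real.log C₁ * n (k+1) ≤ Real.log (C₀/2) + n (k+1) * e (k+1) := by
          have hNK : Real.log K ≤ n (k+1) * Real.log K :=
            le_mul_of_one_le_left hlogK hN1
          have hNe : n (k+1) * κ ≤ n (k+1) * e (k+1) :=
            mul_le_mul_of_nonneg_left (heκ (k+1)) hNpos.le
          have hNC : n (k+1) * Real.log C₁ ≤ n (k+1) * Real.log K :=
            mul_le_mul_of_nonneg_left hlogC₁K hNpos.le
          simp only [hκdef] at hNe
          rw [hlC]
          nlinarith
        calc C₁ ^ n (k+1) = Real.exp (Real.log C₁ * n (k+1)) := h1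
          _ ≤ Real.exp (Real.log (C₀/2) + n (k+1) * e (k+1)) := Real.exp_le_exp.2 h2
          _ = (C₀/2) * Real.exp (n (k+1) * e (k+1)) := by
              rw [Real.exp_add, Real.exp_log hC₀2]
      -- second term bound
      have hterm2 : ∀ t : ℝ, 0 ≤ t →
          C₁ ^ (k+1) * A k t ^ (2 + C₁ / n (k+1)) ≤ (C₀/2) * Real.exp (n (k+1) * e (k+1)) := by
        intro t ht
        have hp : (0:ℝ) ≤ 2 + C₁ / n (k+1) := by positivity
        have h2 : A k t ^ (2 + C₁ / n (k+1)) ≤ Real.exp (n k * e k) ^ (2 + C₁ / n (k+1)) :=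
          Real.rpow_le_rpow (hnn k t ht) (ih t ht) hp
        have h3 : Real.exp (n k * e k) ^ (2 + C₁ / n (k+1))
            = Real.exp (n k * e k * (2 + C₁ / n (k+1))) := (Real.exp_mul _ _).symm
        have hexpo : n k * e k * (2 + C₁ / n (k+1)) ≤ (n (k+1) + c) * e k := by
          have h2n : 2 * n k + a = n (k+1) := by
            rw [hn k, hn (k+1)]
            have : (2:ℝ) ^ (k+1) = 2 * 2 ^ k := by ring
            rw [this]; ring
          have hfrac : n k * (C₁ / n (k+1)) ≤ C₁ := by
            have hdiv : n k / n (k+1) ≤ 1 := div_le_one_of_le₀ (hmono k) hNpos.le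
            calc n k * (C₁ / n (k+1)) = C₁ * (n k / n (k+1)) := by ring
              _ ≤ C₁ * 1 := mul_le_mul_of_nonneg_left hdiv hC₁.le
              _ = C₁ := mul_one _
          have habs : -a ≤ |a| := neg_le_abs a
          have h6 : n k * (2 + C₁ / n (k+1)) ≤ n (k+1) + c := by
            simp only [hcdef]
            nlinarith
          calc n k * e k * (2 + C₁ / n (k+1)) = n k * (2 + C₁ / n (k+1)) * e k := by ring
            _ ≤ (n (k+1) + c) * e k := mul_le_mul_of_nonneg_right h6 (henn k)
        have hC1pow : (C₁:ℝ) ^ (k+1) = Real.exp (((k:ℝ)+1) * Real.log C₁) := by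
          conv_lhs => rw [← Real.exp_log hC₁]
          rw [← Real.exp_nat_mul]
          push_cast
          ring_nf
        have hb : ((k:ℝ)+1) * Real.log C₁ + (n (k+1) + c) * e k
            ≤ Real.log (C₀/2) + n (k+1) * e (k+1) := by
          have hk1 : (1:ℝ) ≤ (k:ℝ)+1 := by
            have : (0:ℝ) ≤ (k:ℝ) := Nat.cast_nonneg k
            linarith
          have h7 : ((k:ℝ)+1) * Real.log C₁ ≤ ((k:ℝ)+1) * |Real.log C₁| :=
            mul_le_mul_of_nonneg_left (le_abs_self _) (by positivity)
          have h8 : |Real.log (2/C₀)| ≤ ((k:ℝ)+1) * |Real.log (2/C₀)| :=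
            le_mul_of_one_le_left (abs_nonneg _) hk1
          have h9 : Real.log (2/C₀) ≤ |Real.log (2/C₀)| := le_abs_self _
          have h10 := hkey k
          simp only [hLdef] at h10
          rw [hlC]
          nlinarith
        calc C₁ ^ (k+1) * A k t ^ (2 + C₁ / n (k+1))
            ≤ C₁ ^ (k+1) * Real.exp (n k * e k * (2 + C₁ / n (k+1))) := by
              apply mul_le_mul_of_nonneg_left _ (by positivity)
              rw [← h3]; exact h2
          _ = Real.exp (((k:ℝ)+1) * Real.log C₁ + n k * e k * (2 + C₁ / n (k+1))) := by
              rw [hC1pow, ← Real.exp_add]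
          _ ≤ Real.exp (Real.log (C₀/2) + n (k+1) * e (k+1)) := by
              apply Real.exp_le_exp.2
              have := hb
              linarith [hexpo]
          _ = (C₀/2) * Real.exp (n (k+1) * e (k+1)) := by
              rw [Real.exp_add, Real.exp_log hC₀2]
      -- apply ODE lemma
      set G : ℝ := C₀ * Real.exp (n (k+1) * e (k+1)) with hGdef
      have hGC : G / C₀ = Real.exp (n (k+1) * e (k+1)) := by
        simp only [hGdef]
        field_simp
      have hrhs : ∀ t : ℝ, 0 ≤ t → deriv (A (k+1)) t + C₀ * A (k+1) t ≤ G := by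
        intro t ht
        have h1 := hineq (k+1) (by omega) t ht
        simp only [Nat.add_sub_cancel] at h1
        have := hterm2 t ht
        simp only [hGdef]
        linarith [hterm1]
      have hinit : A (k+1) 0 ≤ G / C₀ := by
        rw [hGC]
        have hx : 0 ≤ A (k+1) 0 := hnn _ 0 le_rfl
        have h1 := Real.rpow_le_rpow (Real.rpow_nonneg hx _) (h0 (k+1)) hNpos.le
        rw [← Real.rpow_mul hx, inv_mul_cancel₀ hNne, Real.rpow_one] at h1
        have hMe : M ≤ Real.exp (e (k+1)) := by
          have h3 : Real.exp κ = K * K := by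
            simp only [hκdef]
            rw [two_mul, Real.exp_add, Real.exp_log hKpos]
          have h4 : M ≤ Real.exp κ := by
            rw [h3]
            nlinarith [mul_nonneg (by linarith : (0:ℝ) ≤ K - 1) hKpos.le]
          exact le_trans h4 (Real.exp_le_exp.2 (heκ (k+1)))
        have h2 : M ^ n (k+1) ≤ Real.exp (e (k+1)) ^ n (k+1) :=
          Real.rpow_le_rpow hM.le hMe hNpos.le
        rw [← Real.exp_mul] at h2
        calc A (k+1) 0 ≤ M ^ n (k+1) := h1
          _ ≤ Real.exp (e (k+1) * n (k+1)) := h2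
          _ = Real.exp (n (k+1) * e (k+1)) := by ring_nf
      have := aux_ode17 (A (k+1)) (hdiff (k+1)) hC₀ G hrhs hinit
      intro t ht
      have h5 := this t ht
      rw [hGC] at h5
      exact h5
  -- conclude
  refine ⟨Real.exp Ebd, fun k t ht => ?_⟩
  have h1 := Real.rpow_le_rpow (hnn k t ht) (hclaim k t ht) (inv_nonneg.2 (hnpos k).le)
  have h2 : Real.exp (n k * e k) ^ (n k)⁻¹ = Real.exp (e k) := by
    rw [← Real.exp_mul]
    congr 1
    rw [mul_comm (n k) (e k), mul_assoc, mul_inv_cancel₀ (hnne k), mul_one]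
  rw [h2] at h1
  exact le_trans h1 (Real.exp_le_exp.2 (heE k))
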